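/- Let A : ℝ → Mat₂(ℝ) be a curve of 2×2 real matrices that is differentiable at t₀ with derivative A'(t₀), and let v ∈ ℝ² be such that A(t₀)v ≠ 0. Then the limit as t → t₀ of (1/|t − t₀|) · |(A(t)v) ∧ (A(t₀)v)| / (‖A(t)v‖ · ‖A(t₀)v‖) exists and equals |(A(t₀)v) ∧ (A'(t₀)v)| / ‖A(t₀)v‖². (This gives the speed of the induced projective curve t ↦ Â(t)v̂ in ℙ¹.) -/

import Mathlib

open Matrix Filter Topology

noncomputable section

/-- The wedge product `u ∧ w := u₁w₂ − u₂w₁` of two vectors in `ℝ²`. -/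
def wedge (u w : Fin 2 → ℝ) : ℝ := u 0 * w 1 - u 1 * w 0

/-- The Euclidean norm on `ℝ²`. -/
def vnorm (v : Fin 2 → ℝ) : ℝ := Real.sqrt (v 0 ^ 2 + v 1 ^ 2)

/-- If `A : ℝ → Mat₂(ℝ)` is differentiable at `t₀` with derivative `A'`
and `A(t₀)v ≠ 0`, then
`(1/|t − t₀|) · |(A(t)v) ∧ (A(t₀)v)| / (‖A(t)v‖ · ‖A(t₀)v‖)` tends, as `t → t₀`, to
`|(A(t₀)v) ∧ (A'v)| / ‖A(t₀)v‖²`. -/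
theorem stmt_0 (A : ℝ → Matrix (Fin 2) (Fin 2) ℝ) (A' : Matrix (Fin 2) (Fin 2) ℝ) (t₀ : ℝ)
    (hA : ∀ i j, HasDerivAt (fun t => A t i j) (A' i j) t₀)
    (v : Fin 2 → ℝ) (hv : (A t₀).mulVec v ≠ 0) :
    Tendsto
      (fun t => (1 / |t - t₀|) *
        (|wedge ((A t).mulVec v) ((A t₀).mulVec v)| /
          (vnorm ((A t).mulVec v) * vnorm ((A t₀).mulVec v))))
      (𝓝[≠] t₀)
      (𝓝 (|wedge ((A t₀).mulVec v) (A'.mulVec v)| / vnorm ((A t₀).mulVec v) ^ 2)) := by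
  set f : ℝ → Fin 2 → ℝ := fun t => (A t).mulVec v with hf
  -- componentwise derivatives of f
  have hfd : ∀ i, HasDerivAt (fun t => f t i) (A'.mulVec v i) t₀ := by
    intro i
    have : ∀ t, f t i = A t i 0 * v 0 + A t i 1 * v 1 := by
      intro t
      simp only [hf, Matrix.mulVec, dotProduct, Fin.sum_univ_two]
    have hd : A'.mulVec v i = A' i 0 * v 0 + A' i 1 * v 1 := by
      simp [Matrix.mulVec, dotProduct, Fin.sum_univ_two]
    rw [hd]
    simp only [this]
    exact ((hA i 0).mul_const (v 0)).add ((hA i 1).mul_const (v 1))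
  -- derivative of g := wedge (f t) (f t₀)
  set c : Fin 2 → ℝ := f t₀ with hc
  set g : ℝ → ℝ := fun t => wedge (f t) c with hg
  have hgd : HasDerivAt g (wedge (A'.mulVec v) c) t₀ := by
    exact ((hfd 0).mul_const (c 1)).sub ((hfd 1).mul_const (c 0))
  have hg0 : g t₀ = 0 := by
    show c 0 * c 1 - c 1 * c 0 = 0
    ring
  -- slope tendsto
  have hslope : Tendsto (slope g t₀) (𝓝[≠] t₀) (𝓝 (wedge (A'.mulVec v) c)) :=
    hasDerivAt_iff_tendsto_slope.1 hgd
  have habs : Tendsto (fun t => |slope g t₀ t|) (𝓝[≠] t₀) (𝓝 |wedge (A'.mulVec v) c|) :=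
    hslope.abs
  -- continuity of vnorm ∘ f
  have hN : Tendsto (fun t => vnorm (f t)) (𝓝[≠] t₀) (𝓝 (vnorm c)) := by
    have h0 : ContinuousAt (fun t => f t 0) t₀ := (hfd 0).continuousAt
    have h1 : ContinuousAt (fun t => f t 1) t₀ := (hfd 1).continuousAt
    have : ContinuousAt (fun t => vnorm (f t)) t₀ := by
      apply Real.continuous_sqrt.continuousAt.comp
      exact ((h0.pow 2).add (h1.pow 2))
    exact this.continuousWithinAt.tendsto
  have hN0 : vnorm c ≠ 0 := by
    have hcc : c 0 ≠ 0 ∨ c 1 ≠ 0 := by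
      by_contra h
      push_neg at h
      apply hv
      funext i
      fin_cases i
      · exact h.1
      · exact h.2
    have h1 : (0:ℝ) < c 0 ^ 2 + c 1 ^ 2 := by
      rcases hcc with h | h
      · have := pow_pos (abs_pos.2 h) 2
        nlinarith [sq_nonneg (c 1), sq_abs (c 0)]
      · have := pow_pos (abs_pos.2 h) 2
        nlinarith [sq_nonneg (c 0), sq_abs (c 1)]
    exact ne_of_gt (Real.sqrt_pos.2 h1)
  have hden : Tendsto (fun t => vnorm (f t) * vnorm c) (𝓝[≠] t₀) (𝓝 (vnorm c * vnorm c)) :=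
    hN.mul tendsto_const_nhds
  have hdiv : Tendsto (fun t => |slope g t₀ t| / (vnorm (f t) * vnorm c)) (𝓝[≠] t₀)
      (𝓝 (|wedge (A'.mulVec v) c| / (vnorm c * vnorm c))) :=
    habs.div hden (by positivity)
  -- rewrite target
  have htarget : |wedge (A'.mulVec v) c| / (vnorm c * vnorm c)
      = |wedge c (A'.mulVec v)| / vnorm c ^ 2 := by
    have : |wedge (A'.mulVec v) c| = |wedge c (A'.mulVec v)| := by
      rw [← abs_neg]; congr 1; simp [wedge]; ring
    rw [this, sq]
  rw [← htarget]
  refine hdiv.congr' ?_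
  filter_upwards [self_mem_nhdsWithin] with t ht
  have ht' : t - t₀ ≠ 0 := sub_ne_zero.2 ht
  have hs : |slope g t₀ t| = |g t| / |t - t₀| := by
    rw [slope_def_field, hg0, sub_zero, abs_div]
  rw [hs]
  field_simp
  change |g t| / vnorm (f t) = vnorm c * |g t| / (vnorm (f t) * vnorm c)
  rw [mul_comm (vnorm (f t)), mul_div_mul_left _ _ hN0]
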